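/- Forced-variable lemma for QUBO with upper-bounded coefficients: Let Q be an n×n upper triangular integer matrix with all entries q_{ij} < u for a positive constant u. If q_{kℓ} < −2(n−1)·u for some k ≤ ℓ, then every minimizer z ∈ {0,1}^n of f(z) = ∑_{i≤j} q_{ij} z_i z_j satisfies z_k·z_ℓ = 1 (i.e., z_k = z_ℓ = 1). -/

import Mathlib

/-- Forced-variable lemma.  If `Q` is upper triangular with all entries `< u`
(`u > 0`) and `Q k ℓ < -2(n-1)·u` for some `k ≤ ℓ`, then every minimizer `z` of the QUBO
objective has `z_k · z_ℓ = 1`. -/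
theorem stmt_10 (n : ℕ) (u : ℤ) (hu : 0 < u) (Q : Matrix (Fin n) (Fin n) ℤ)
    (htri : ∀ i j : Fin n, j < i → Q i j = 0)
    (hub : ∀ i j, Q i j < u)
    (k ℓ : Fin n) (hkl : k ≤ ℓ) (hneg : Q k ℓ < -(2 * ((n : ℤ) - 1) * u))
    (z : Fin n → Bool)
    (hmin : ∀ x : Fin n → Bool,
      (∑ i, ∑ j, if i ≤ j then Q i j * (if z i then (1:ℤ) else 0)
          * (if z j then (1:ℤ) else 0) else 0)
      ≤ ∑ i, ∑ j, if i ≤ j then Q i j * (if x i then (1:ℤ) else 0)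
          * (if x j then (1:ℤ) else 0) else 0) :
    (if z k then (1:ℤ) else 0) * (if z ℓ then (1:ℤ) else 0) = 1 := by
  classical
  by_contra hcon
  have hz0 : (if z k then (1:ℤ) else 0) * (if z ℓ then (1:ℤ) else 0) = 0 := by
    rcases Bool.eq_false_or_eq_true (z k) with h | h <;>
      rcases Bool.eq_false_or_eq_true (z ℓ) with h' | h' <;>
      simp [h, h'] at hcon ⊢
  set x : Fin n → Bool := fun i => if i = k ∨ i = ℓ then true else z i with hxdef
  set bz : Fin n → ℤ := fun i => if z i then (1:ℤ) else 0 with hbzdef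
  set bx : Fin n → ℤ := fun i => if x i then (1:ℤ) else 0 with hbxdef
  have hbz0 : ∀ i, 0 ≤ bz i := by intro i; simp only [hbzdef]; split <;> norm_num
  have hbx0 : ∀ i, 0 ≤ bx i := by intro i; simp only [hbxdef]; split <;> norm_num
  have hbx1 : ∀ i, bx i ≤ 1 := by intro i; simp only [hbxdef]; split <;> norm_num
  have hle : ∀ i, bz i ≤ bx i := by
    intro i
    simp only [hbzdef, hbxdef, hxdef]
    by_cases h : z i
    · simp [h]
    · simp [h]; split <;> norm_num
  have hxk : bx k = 1 := by simp [hbxdef, hxdef]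
  have hxl : bx ℓ = 1 := by simp [hbxdef, hxdef]
  have heq : ∀ i, i ≠ k → i ≠ ℓ → bx i = bz i := by
    intro i h1 h2
    simp [hbxdef, hbzdef, hxdef, h1, h2]
  set D : Fin n → Fin n → ℤ := fun i j =>
    (if i ≤ j then Q i j * bx i * bx j else 0) -
    (if i ≤ j then Q i j * bz i * bz j else 0) with hDdef
  have key : (0:ℤ) ≤ ∑ i, ∑ j, D i j := by
    have h := sub_nonneg.mpr (hmin x)
    have e : ∑ i, ∑ j, D i j =
        (∑ i, ∑ j, if i ≤ j then Q i j * bx i * bx j else 0)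
        - (∑ i, ∑ j, if i ≤ j then Q i j * bz i * bz j else 0) := by
      simp only [hDdef, Finset.sum_sub_distrib]
    rw [e]
    exact h
  -- rewrite as a sum over pairs
  have hprod : ∑ i, ∑ j, D i j = ∑ p ∈ Finset.univ ×ˢ Finset.univ, D p.1 p.2 :=
    (Finset.sum_product' _ _ _).symm
  have hmemkl : (k, ℓ) ∈ Finset.univ ×ˢ (Finset.univ : Finset (Fin n)) := by simp
  set E := (Finset.univ ×ˢ (Finset.univ : Finset (Fin n))).erase (k, ℓ) with hEdef
  have hsplit : ∑ p ∈ Finset.univ ×ˢ Finset.univ, D p.1 p.2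
      = D k ℓ + ∑ p ∈ E, D p.1 p.2 := (Finset.add_sum_erase _ _ hmemkl).symm
  have hDkl : D k ℓ = Q k ℓ := by
    simp only [hDdef, if_pos hkl, hxk, hxl]
    have : Q k ℓ * bz k * bz ℓ = Q k ℓ * (bz k * bz ℓ) := by ring
    rw [this]
    simp only [hbzdef] at hz0 ⊢
    rw [hz0]
    ring
  set P : Fin n × Fin n → Prop := fun p =>
    p.1 ≤ p.2 ∧ (p.1 = k ∨ p.1 = ℓ ∨ p.2 = k ∨ p.2 = ℓ) with hPdef
  have hbound : ∀ p ∈ E, D p.1 p.2 ≤ (if P p then u else 0) := by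
    intro p hp
    by_cases h1 : p.1 ≤ p.2
    · by_cases h2 : p.1 = k ∨ p.1 = ℓ ∨ p.2 = k ∨ p.2 = ℓ
      · rw [if_pos ⟨h1, h2⟩]
        simp only [hDdef, if_pos h1]
        have hA1 : bx p.1 * bx p.2 ≤ 1 := by
          calc bx p.1 * bx p.2 ≤ 1 * 1 :=
            mul_le_mul (hbx1 p.1) (hbx1 p.2) (hbx0 p.2) (by norm_num)
          _ = 1 := by ring
        have hBA : bz p.1 * bz p.2 ≤ bx p.1 * bx p.2 :=
          mul_le_mul (hle p.1) (hle p.2) (hbz0 p.2) (hbx0 p.1)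
        have hQ : Q p.1 p.2 < u := hub p.1 p.2
        have e1 : Q p.1 p.2 * bx p.1 * bx p.2 = Q p.1 p.2 * (bx p.1 * bx p.2) := by ring
        have e2 : Q p.1 p.2 * bz p.1 * bz p.2 = Q p.1 p.2 * (bz p.1 * bz p.2) := by ring
        rw [e1, e2]
        nlinarith [mul_nonneg (hbz0 p.1) (hbz0 p.2)]
      · have hP : ¬ P p := by
          simp only [hPdef]; tauto
        rw [if_neg hP]
        push_neg at h2
        obtain ⟨h21, h22, h23, h24⟩ := h2
        simp [hDdef, if_pos h1, heq p.1 h21 h22, heq p.2 h23 h24]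
    · have hP : ¬ P p := by
        simp only [hPdef]; tauto
      rw [if_neg hP, hDdef]
      simp [if_neg h1]
  set T := E.filter P with hTdef
  have hsum2 : ∑ p ∈ E, D p.1 p.2 ≤ (T.card : ℤ) * u := by
    calc ∑ p ∈ E, D p.1 p.2 ≤ ∑ p ∈ E, (if P p then u else 0) :=
          Finset.sum_le_sum hbound
      _ = ∑ p ∈ T, u := by rw [hTdef, Finset.sum_filter]
      _ = (T.card : ℤ) * u := by rw [Finset.sum_const, nsmul_eq_mul]
  -- cardinality bound
  set Tk := (Finset.univ ×ˢ (Finset.univ : Finset (Fin n))).filter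
      (fun p => p.1 ≤ p.2 ∧ (p.1 = k ∨ p.2 = k) ∧ p ≠ (k, ℓ)) with hTkdef
  set Tl := (Finset.univ ×ˢ (Finset.univ : Finset (Fin n))).filter
      (fun p => p.1 ≤ p.2 ∧ (p.1 = ℓ ∨ p.2 = ℓ) ∧ p ≠ (k, ℓ)) with hTldef
  have hTsub : T ⊆ Tk ∪ Tl := by
    intro p hp
    rw [hTdef, Finset.mem_filter] at hp
    obtain ⟨hpE, hP1, hP2⟩ := hp
    rw [hEdef, Finset.mem_erase] at hpE
    obtain ⟨hpne, hpu⟩ := hpE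
    rw [Finset.mem_union, hTkdef, hTldef, Finset.mem_filter, Finset.mem_filter]
    rcases hP2 with h | h | h | h
    · exact Or.inl ⟨hpu, hP1, Or.inl h, hpne⟩
    · exact Or.inr ⟨hpu, hP1, Or.inl h, hpne⟩
    · exact Or.inl ⟨hpu, hP1, Or.inr h, hpne⟩
    · exact Or.inr ⟨hpu, hP1, Or.inr h, hpne⟩
  have hcardTk : Tk.card ≤ n - 1 := by
    have : Tk.card ≤ (Finset.univ.erase ℓ).card := by
      apply Finset.card_le_card_of_injOn (fun p => if p.1 = k then p.2 else p.1)
      · intro p hp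
        rw [hTkdef, Finset.mem_coe, Finset.mem_filter] at hp
        obtain ⟨_, hle', hor, hne⟩ := hp
        rw [Finset.mem_coe, Finset.mem_erase]
        refine ⟨?_, Finset.mem_univ _⟩
        beta_reduce
        by_cases h : p.1 = k
        · rw [if_pos h]
          intro h2
          exact hne (Prod.ext h h2)
        · rw [if_neg h]
          rcases hor with h' | h'
          · exact absurd h' h
          · intro h2
            apply h
            have : ℓ ≤ k := h2 ▸ (h' ▸ hle')
            have : ℓ = k := le_antisymm this hkl
            rw [h2, this]
      · intro p hp q hq hfq
        simp only [Finset.mem_coe, hTkdef, Finset.mem_filter] at hp hq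
        obtain ⟨_, hpl, hpor, hpne⟩ := hp
        obtain ⟨_, hql, hqor, hqne⟩ := hq
        simp only at hfq
        by_cases h : p.1 = k <;> by_cases h' : q.1 = k
        · rw [if_pos h, if_pos h'] at hfq
          exact Prod.ext (h.trans h'.symm) hfq
        · rw [if_pos h, if_neg h'] at hfq
          rcases hqor with hq1 | hq1
          · exact absurd hq1 h'
          · exfalso
            apply h'
            have h1 : k ≤ p.2 := h ▸ hpl
            have h2 : p.2 = q.1 := hfq
            have h3 : q.1 ≤ q.2 := hql
            have : k ≤ k := le_trans h1 (h2 ▸ (hq1 ▸ h3))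
            have : q.1 ≤ k := hq1 ▸ hql
            exact le_antisymm this (h2 ▸ h1)
        · rw [if_neg h, if_pos h'] at hfq
          rcases hpor with hp1 | hp1
          · exact absurd hp1 h
          · exfalso
            apply h
            have h1 : k ≤ q.2 := h' ▸ hql
            have : p.1 ≤ k := hp1 ▸ hpl
            exact le_antisymm this (hfq ▸ h1)
        · rw [if_neg h, if_neg h'] at hfq
          rcases hpor with hp1 | hp1
          · exact absurd hp1 h
          · rcases hqor with hq1 | hq1
            · exact absurd hq1 h'
            · exact Prod.ext hfq (hp1.trans hq1.symm)
    calc Tk.card ≤ (Finset.univ.erase ℓ).card := this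
      _ = n - 1 := by rw [Finset.card_erase_of_mem (Finset.mem_univ _), Finset.card_univ,
            Fintype.card_fin]
  have hcardTl : Tl.card ≤ n - 1 := by
    have : Tl.card ≤ (Finset.univ.erase k).card := by
      apply Finset.card_le_card_of_injOn (fun p => if p.2 = ℓ then p.1 else p.2)
      · intro p hp
        rw [hTldef, Finset.mem_coe, Finset.mem_filter] at hp
        obtain ⟨_, hle', hor, hne⟩ := hp
        rw [Finset.mem_coe, Finset.mem_erase]
        refine ⟨?_, Finset.mem_univ _⟩
        beta_reduce
        by_cases h : p.2 = ℓ
        · rw [if_pos h]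
          intro h2
          exact hne (Prod.ext h2 h)
        · rw [if_neg h]
          rcases hor with h' | h'
          · intro h2
            apply h
            have h3 : ℓ ≤ p.2 := h' ▸ hle'
            have h4 : p.2 ≤ ℓ := h2 ▸ hkl
            exact le_antisymm h4 h3
          · exact absurd h' h
      · intro p hp q hq hfq
        simp only [Finset.mem_coe, hTldef, Finset.mem_filter] at hp hq
        obtain ⟨_, hpl, hpor, hpne⟩ := hp
        obtain ⟨_, hql, hqor, hqne⟩ := hq
        simp only at hfq
        by_cases h : p.2 = ℓ <;> by_cases h' : q.2 = ℓ
        · rw [if_pos h, if_pos h'] at hfq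
          exact Prod.ext hfq (h.trans h'.symm)
        · rw [if_pos h, if_neg h'] at hfq
          rcases hqor with hq1 | hq1
          · exfalso
            apply h'
            have h1 : ℓ ≤ q.2 := hq1 ▸ hql
            have h2 : q.2 ≤ ℓ := by
              rw [← hfq]
              exact h ▸ hpl
            exact le_antisymm h2 h1
          · exact absurd hq1 h'
        · rw [if_neg h, if_pos h'] at hfq
          rcases hpor with hp1 | hp1
          · exfalso
            apply h
            have h1 : ℓ ≤ p.2 := hp1 ▸ hpl
            have h2 : p.2 ≤ ℓ := by
              rw [hfq]
              exact h' ▸ hql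
            exact le_antisymm h2 h1
          · exact absurd hp1 h
        · rw [if_neg h, if_neg h'] at hfq
          rcases hpor with hp1 | hp1
          · rcases hqor with hq1 | hq1
            · exact Prod.ext (hp1.trans hq1.symm) hfq
            · exact absurd hq1 h'
          · exact absurd hp1 h
    calc Tl.card ≤ (Finset.univ.erase k).card := this
      _ = n - 1 := by rw [Finset.card_erase_of_mem (Finset.mem_univ _), Finset.card_univ,
            Fintype.card_fin]
  have hn1 : 1 ≤ n := k.pos
  have hcardT : (T.card : ℤ) ≤ 2 * ((n : ℤ) - 1) := by
    have h1 : T.card ≤ Tk.card + Tl.card :=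
      le_trans (Finset.card_le_card hTsub) (Finset.card_union_le _ _)
    have h2 : T.card ≤ (n - 1) + (n - 1) := le_trans h1 (Nat.add_le_add hcardTk hcardTl)
    have := (Nat.cast_le (α := ℤ)).mpr h2
    push_cast [Nat.cast_sub hn1] at this
    linarith
  have hfinal : ∑ i, ∑ j, D i j < 0 := by
    rw [hprod, hsplit, hDkl]
    have : (T.card : ℤ) * u ≤ 2 * ((n : ℤ) - 1) * u :=
      mul_le_mul_of_nonneg_right hcardT (le_of_lt hu)
    linarith [hsum2]
  linarith [key, hfinal]
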